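/- The graph 5C_4^= (the 4-cycle with every edge given multiplicity 5, minus a perfect matching) is strongly Z_7-connected: every Z_7-boundary is achieved by some orientation. -/
import Mathlib

/-- The direction of edge `i` under orientation `o`: if `o i = true` the
reference direction is reversed. -/
def edir {V : Type} {m : ℕ} (ends : Fin m → V × V) (o : Fin m → Bool) (i : Fin m) : V × V :=
  if o i then ((ends i).2, (ends i).1) else ends i

/-- Contribution of edge `i` to `d⁺ - d⁻` at vertex `v`, computed in `ZMod n`. -/
def contrib {V : Type} [DecidableEq V] {m : ℕ} (n : ℕ) (ends : Fin m → V × V)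
    (o : Fin m → Bool) (i : Fin m) (v : V) : ZMod n :=
  (if (edir ends o i).1 = v then 1 else 0) - (if (edir ends o i).2 = v then 1 else 0)

/-- `d⁺_D(v) - d⁻_D(v)` in `ZMod n` for the orientation `o` of the multigraph
with edge-endpoint function `ends`. -/
def netDeg {V : Type} [DecidableEq V] {m : ℕ} (n : ℕ) (ends : Fin m → V × V)
    (o : Fin m → Bool) (v : V) : ZMod n :=
  ∑ i : Fin m, contrib n ends o i v

def fiveC4eq : Fin 18 → Fin 4 × Fin 4 :=
  ![(0, 1), (0, 1), (0, 1), (0, 1),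
    (1, 2), (1, 2), (1, 2), (1, 2), (1, 2),
    (2, 3), (2, 3), (2, 3), (2, 3),
    (3, 0), (3, 0), (3, 0), (3, 0), (3, 0)]

/-- The orientation that reverses the first `a`, `b`, `c`, `d` edges on the four sides. -/
def Orient (a : Fin 5) (b : Fin 6) (c : Fin 5) (d : Fin 6) : Fin 18 → Bool := fun i =>
  if i.val < 4 then decide (i.val < a.val)
  else if i.val < 9 then decide (i.val - 4 < b.val)
  else if i.val < 13 then decide (i.val - 9 < c.val)
  else decide (i.val - 13 < d.val)

set_option maxRecDepth 40000 in
set_option maxHeartbeats 2000000 in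
lemma netDeg_Orient : ∀ a : Fin 5, ∀ b : Fin 6, ∀ c : Fin 5, ∀ d : Fin 6,
    netDeg 7 fiveC4eq (Orient a b c d) 1 =
      (5 - 2*(b.val : ZMod 7)) - (4 - 2*(a.val : ZMod 7)) ∧
    netDeg 7 fiveC4eq (Orient a b c d) 2 =
      (4 - 2*(c.val : ZMod 7)) - (5 - 2*(b.val : ZMod 7)) ∧
    netDeg 7 fiveC4eq (Orient a b c d) 3 =
      (5 - 2*(d.val : ZMod 7)) - (4 - 2*(c.val : ZMod 7)) := by decide

lemma searchS1 : ∀ b1 b2 b3 : ZMod 7, ∃ s1 : ZMod 7, s1 ≠ 0 ∧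
    (s1 - b1 = 0 ∨ s1 - b1 = 2 ∨ s1 - b1 = 3 ∨ s1 - b1 = 4 ∨ s1 - b1 = 5) ∧
    (s1 + b2 = 0 ∨ s1 + b2 = 2 ∨ s1 + b2 = 3 ∨ s1 + b2 = 4 ∨ s1 + b2 = 5) ∧
    (s1 + b2 + b3 ≠ 0) := by decide

lemma hit5 : ∀ t : ZMod 7, t ≠ 0 → ∃ b : Fin 6, 5 - 2*(b.val : ZMod 7) = t := by decide

lemma hit4 : ∀ t : ZMod 7, (t = 0 ∨ t = 2 ∨ t = 3 ∨ t = 4 ∨ t = 5) →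
    ∃ a : Fin 5, 4 - 2*(a.val : ZMod 7) = t := by decide

lemma sum_contrib {V : Type} [Fintype V] [DecidableEq V] {m : ℕ} (n : ℕ)
    (ends : Fin m → V × V) (o : Fin m → Bool) (i : Fin m) :
    ∑ v : V, contrib n ends o i v = 0 := by
  simp [contrib, Finset.sum_sub_distrib, Finset.sum_ite_eq]

lemma sum_netDeg (o : Fin 18 → Bool) : ∑ v : Fin 4, netDeg 7 fiveC4eq o v = 0 := by
  unfold netDeg
  rw [Finset.sum_comm]
  simp [sum_contrib]

set_option maxHeartbeats 2000000

theorem fiveC4eq_strongly_Z7_connected (β : Fin 4 → ZMod 7) (hβ : ∑ v : Fin 4, β v = 0) :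
    ∃ o : Fin 18 → Bool, ∀ v : Fin 4, netDeg 7 fiveC4eq o v = β v := by
  obtain ⟨s1, hs1, hS0, hS2, hs3⟩ := searchS1 (β 1) (β 2) (β 3)
  obtain ⟨a, ha⟩ := hit4 _ hS0
  obtain ⟨b, hb⟩ := hit5 _ hs1
  obtain ⟨c, hc⟩ := hit4 _ hS2
  obtain ⟨d, hd⟩ := hit5 _ hs3
  obtain ⟨h1, h2, h3⟩ := netDeg_Orient a b c d
  rw [hb, ha] at h1
  rw [hc, hb] at h2
  rw [hd, hc] at h3
  have e1 : netDeg 7 fiveC4eq (Orient a b c d) 1 = β 1 := by rw [h1]; ring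
  have e2 : netDeg 7 fiveC4eq (Orient a b c d) 2 = β 2 := by rw [h2]; ring
  have e3 : netDeg 7 fiveC4eq (Orient a b c d) 3 = β 3 := by rw [h3]; ring
  have hsum := sum_netDeg (Orient a b c d)
  rw [Fin.sum_univ_four] at hsum
  rw [Fin.sum_univ_four] at hβ
  have e0 : netDeg 7 fiveC4eq (Orient a b c d) 0 = β 0 := by
    rw [e1, e2, e3] at hsum
    linear_combination hsum - hβ
  refine ⟨Orient a b c d, fun v => ?_⟩
  have h4 : ∀ w : Fin 4, w = 0 ∨ w = 1 ∨ w = 2 ∨ w = 3 := by decide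
  rcases h4 v with h | h | h | h <;> rw [h]
  · exact e0
  · exact e1
  · exact e2
  · exact e3
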